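/- Let h(z) = log(1+z) (principal branch) on the open unit disc 𝔻. Then h ∈ H², but ∫_𝔻 |(z−1) h'''(z)|² (1−|z|²)³ dA(z) = +∞. -/

import Mathlib

open Complex MeasureTheory Real ENNReal intervalIntegral

private theorem ball_bound (x : ℝ) (hx : 0 < x) (hx2 : x ≤ 1/2) (z : ℂ) (hz : z ∈ Metric.ball (-1 + x : ℂ) (x/4)) :
    (2/5)/x^3 ≤ ‖(z - 1) * (2 / (1 + z) ^ 3)‖ ^ 2 * (1 - ‖z‖ ^ 2) ^ 3 := by
  rw [Metric.mem_ball, dist_eq_norm] at hz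
  have hc : ‖(-1 + x : ℂ)‖ = 1 - x := by
    rw [show (-1 + (x:ℂ)) = ((-1 + x : ℝ) : ℂ) by push_cast; ring, Complex.norm_real,
      Real.norm_eq_abs, abs_of_nonpos (by linarith)]
    ring
  have hxn : ‖(x:ℂ)‖ = x := by rw [Complex.norm_real, Real.norm_eq_abs, abs_of_pos hx]
  have h1 : ‖z‖ ≤ 1 - 3*x/4 := by
    calc ‖z‖ = ‖(z - (-1+x)) + (-1+x)‖ := by ring_nf
    _ ≤ ‖z - (-1+x)‖ + ‖(-1+x:ℂ)‖ := norm_add_le _ _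
    _ ≤ x/4 + (1-x) := by rw [hc]; linarith [hz.le]
    _ = 1 - 3*x/4 := by ring
  have h2 : ‖1 + z‖ ≤ 5*x/4 := by
    calc ‖1 + z‖ = ‖(z - (-1+x)) + (x:ℂ)‖ := by ring_nf
    _ ≤ ‖z - (-1+x)‖ + ‖(x:ℂ)‖ := norm_add_le _ _
    _ ≤ x/4 + x := by rw [hxn]; linarith [hz.le]
    _ = 5*x/4 := by ring
  have h2' : (0:ℝ) < ‖1 + z‖ := by
    have h := norm_sub_norm_le ((x:ℂ)) (-(z - (-1+x)))
    rw [norm_neg, show (x:ℂ) - -(z - (-1+x)) = 1 + z by push_cast; ring, hxn] at h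
    linarith [hz.le]
  have h3 : (1:ℝ) ≤ ‖z - 1‖ := by
    have h := norm_sub_norm_le (((x - 2 : ℝ)):ℂ) (-(z - (-1+x)))
    rw [norm_neg, show ((x - 2:ℝ):ℂ) - -(z - (-1+x)) = z - 1 by push_cast; ring,
      Complex.norm_real, Real.norm_eq_abs, abs_of_nonpos (by linarith)] at h
    linarith [hz.le]
  have hz1 : 1 - ‖z‖^2 ≥ 3*x/4 := by nlinarith [norm_nonneg z]
  have hnorm : ‖(z - 1) * (2 / (1 + z) ^ 3)‖ = ‖z-1‖ * (2 / ‖1+z‖^3) := by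
    rw [norm_mul, norm_div, norm_pow]; norm_num
  rw [hnorm]
  have key : 2 / ‖1+z‖^3 ≥ 2 / (5*x/4)^3 := by
    apply div_le_div_of_nonneg_left (by norm_num) (by positivity)
    exact pow_le_pow_left₀ (norm_nonneg _) h2 3
  calc (2/5)/x^3 ≤ (1 * (2/(5*x/4)^3))^2 * (3*x/4)^3 := by
        rw [div_le_iff₀ (by positivity)]
        field_simp
        norm_num
  _ ≤ (‖z-1‖ * (2/‖1+z‖^3))^2 * (1 - ‖z‖^2)^3 := by
      apply mul_le_mul _ (pow_le_pow_left₀ (by positivity) hz1 3) (by positivity) (by positivity)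
      apply pow_le_pow_left₀ (by positivity)
      exact mul_le_mul h3 key (by positivity) (by positivity)

set_option maxHeartbeats 1000000 in
private theorem pt_bound (r θ : ℝ) (hr0 : 0 < r) (hr1 : r < 1) (hθ : θ ∈ Set.Icc (0:ℝ) (2*π))
    (hne : θ ≠ π) :
    ‖Complex.log (1 + (r : ℂ) * Complex.exp (θ * Complex.I))‖ ^ 2
      ≤ 200 * ((θ - π)^2) ^ (-(4:ℝ)⁻¹) + 50 := by
  obtain ⟨hθ0, hθ2⟩ := hθ
  have hpi := Real.pi_pos
  have hpi315 := Real.pi_lt_d2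
  have hpi31 := Real.pi_gt_d6
  set z : ℂ := 1 + (r : ℂ) * Complex.exp (θ * Complex.I) with hz
  set s : ℝ := ‖z‖ with hs
  set u : ℝ := (θ - π)^2 with hu
  have hu0 : 0 < u := by
    have : θ - π ≠ 0 := sub_ne_zero.2 hne
    positivity
  have hre : z.re = 1 + r * Real.cos θ := by
    simp [hz, Complex.add_re, Complex.mul_re, Complex.exp_ofReal_mul_I_re]
  have hres : z.re ≤ s := Complex.re_le_norm z
  have hcos1 : |Real.cos θ| ≤ 1 := Real.abs_cos_le_one θ
  have hs2 : s ≤ 2 := by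
    have h1 : ‖(r:ℂ) * Complex.exp (θ * Complex.I)‖ = r := by
      rw [norm_mul, Complex.norm_exp_ofReal_mul_I, Complex.norm_real, Real.norm_eq_abs, abs_of_pos hr0, mul_one]
    calc s ≤ ‖(1:ℂ)‖ + ‖(r:ℂ) * Complex.exp (θ * Complex.I)‖ := by
          rw [hs, hz]; exact norm_add_le _ _
    _ = 1 + r := by rw [h1, norm_one]
    _ ≤ 2 := by linarith
  have hs0 : 0 < s := by
    have : (0:ℝ) < 1 + r * Real.cos θ := by nlinarith [abs_le.1 hcos1]
    linarith [hres.trans_lt' (by linarith : (0:ℝ) < z.re), hre ▸ this, hres]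
  -- lower bound 1 + cos θ ≥ u / 5
  have hlow : u / 5 ≤ 1 + Real.cos θ := by
    set φ : ℝ := θ - π with hφ
    have hφabs : |φ| ≤ π := by rw [abs_le]; constructor <;> [linarith; linarith]
    have hcosφ : Real.cos θ = -Real.cos φ := by
      rw [show θ = φ + π by ring, Real.cos_add_pi]
    have hsin2 : Real.sin (φ/2)^2 = Real.sin (|φ|/2)^2 := by
      rcases abs_cases φ with ⟨h, _⟩ | ⟨h, _⟩
      · rw [h]
      · rw [h, show -φ/2 = -(φ/2) by ring, Real.sin_neg]; ring
    have hone : 1 - Real.cos φ = 2 * Real.sin (φ/2)^2 := by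
      have h1 := Real.cos_two_mul' (φ/2)
      have h2 := Real.sin_sq_add_cos_sq (φ/2)
      rw [show 2*(φ/2) = φ by ring] at h1
      linarith
    have hms := Real.mul_le_sin (x := |φ|/2) (by positivity) (by linarith [hφabs])
    have hsinn : 0 ≤ Real.sin (|φ|/2) := le_trans (by positivity) hms
    have hsq : (2/π * (|φ|/2))^2 ≤ Real.sin (|φ|/2)^2 := by
      apply pow_le_pow_left₀ (by positivity) hms
    have habs2 : |φ|^2 = u := by rw [_root_.sq_abs]
    have heq : (2/π * (|φ|/2))^2 = u / π^2 := by
      rw [mul_pow, div_pow, div_pow, habs2]; field_simp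
    have h5 : u/π^2 ≤ Real.sin (|φ|/2)^2 := heq ▸ hsq
    have h6 : u ≤ Real.sin (|φ|/2)^2 * π^2 := by
      rw [div_le_iff₀ (by positivity)] at h5; exact h5
    have hπ2 : π^2 ≤ 10 := by nlinarith
    rw [hcosφ]
    nlinarith [h6, hπ2, sq_nonneg (Real.sin (|φ|/2)), hone, hsin2]
  -- |log s| bound
  have hlog : |Real.log s| ≤ 1 + 10 * u ^ (-(8:ℝ)⁻¹) := by
    have hrp : (0:ℝ) ≤ u ^ (-(8:ℝ)⁻¹) := Real.rpow_nonneg hu0.le _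
    by_cases hs1 : 1 ≤ s
    · rw [_root_.abs_of_nonneg (Real.log_nonneg hs1)]
      have h2 := Real.log_le_log (by linarith) hs2
      have := Real.log_two_lt_d9
      linarith
    · push_neg at hs1
      have hclt : Real.cos θ < 0 := by
        by_contra hc
        push_neg at hc
        have : (1:ℝ) ≤ z.re := by rw [hre]; nlinarith
        linarith [hres]
      have hsl : u/5 ≤ s := by
        have h1 : 1 + Real.cos θ ≤ 1 + r * Real.cos θ := by nlinarith
        calc u/5 ≤ 1 + Real.cos θ := hlow
        _ ≤ z.re := by rw [hre]; linarith
        _ ≤ s := hres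
      rw [_root_.abs_of_nonpos (Real.log_nonpos hs0.le hs1.le), ← Real.log_inv]
      have hinv : s⁻¹ ≤ 5/u := by
        rw [inv_le_comm₀ hs0 (by positivity), inv_div]
        exact hsl
      calc Real.log s⁻¹ ≤ Real.log (5/u) := Real.log_le_log (by positivity) hinv
      _ ≤ (5/u) ^ ((8:ℝ)⁻¹) / (8:ℝ)⁻¹ := Real.log_le_rpow_div (by positivity) (by norm_num)
      _ = 8 * ((5:ℝ) ^ ((8:ℝ)⁻¹) * u ^ (-(8:ℝ)⁻¹)) := by
          rw [Real.div_rpow (by norm_num) hu0.le, Real.rpow_neg hu0.le, div_eq_mul_inv]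
          ring
      _ ≤ 8 * ((5/4) * u ^ (-(8:ℝ)⁻¹)) := by
          apply mul_le_mul_of_nonneg_left _ (by norm_num)
          apply mul_le_mul_of_nonneg_right _ hrp
          rw [Real.rpow_inv_le_iff_of_pos (by norm_num) (by norm_num) (by norm_num)]
          rw [show ((8:ℝ)) = ((8:ℕ):ℝ) by norm_num, Real.rpow_natCast]
          norm_num
      _ ≤ 1 + 10 * u ^ (-(8:ℝ)⁻¹) := by nlinarith
  -- assemble
  have harg : ‖Complex.log z‖ ≤ |Real.log s| + π := by
    calc ‖Complex.log z‖ = ‖Complex.log z‖ := rfl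
    _ ≤ |(Complex.log z).re| + |(Complex.log z).im| := Complex.norm_le_abs_re_add_abs_im _
    _ = |Real.log s| + |Complex.arg z| := by rw [Complex.log_re, Complex.log_im]
    _ ≤ |Real.log s| + π := by linarith [Complex.abs_arg_le_pi z]
  set v : ℝ := u ^ (-(8:ℝ)⁻¹) with hvdef
  have hv : (0:ℝ) ≤ v := Real.rpow_nonneg hu0.le _
  have hnn : ‖Complex.log z‖ ≤ (1 + π) + 10 * v := by linarith [hlog, harg]
  have hsq : ‖Complex.log z‖^2 ≤ ((1 + π) + 10 * v)^2 :=
    pow_le_pow_left₀ (norm_nonneg _) hnn 2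
  have hvv : v^2 = u ^ (-(4:ℝ)⁻¹) := by
    rw [hvdef, ← Real.rpow_natCast (u ^ (-(8:ℝ)⁻¹)) 2, ← Real.rpow_mul hu0.le]
    norm_num
  rw [← hvv]
  nlinarith [hsq, sq_nonneg ((1+π) - 10*v), hpi315, hpi, hv]

private theorem G_integrable :
    IntervalIntegrable (fun θ : ℝ => 200 * ((θ - π)^2) ^ (-(4:ℝ)⁻¹) + 50) volume 0 (2*π) := by
  have hpi := Real.pi_pos
  set g0 : ℝ → ℝ := fun t => ((t^2 : ℝ)) ^ (-(4:ℝ)⁻¹) with hg0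
  have h1 : IntervalIntegrable (fun t : ℝ => t ^ (-(2:ℝ)⁻¹)) volume 0 π :=
    intervalIntegrable_rpow' (by norm_num)
  have h2 : IntervalIntegrable g0 volume 0 π := by
    rw [intervalIntegrable_iff] at h1 ⊢
    apply h1.congr_fun ?_ measurableSet_uIoc
    intro t ht
    rw [Set.uIoc_of_le hpi.le] at ht
    have ht0 : 0 < t := ht.1
    rw [hg0]
    simp only
    rw [← Real.rpow_natCast t 2, ← Real.rpow_mul ht0.le]
    norm_num
  have h3 : IntervalIntegrable g0 volume (-π) 0 := by
    have := ((IntervalIntegrable.iff_comp_neg (f := g0) (a := 0) (b := π)).mp h2)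
    have heq : (fun x : ℝ => g0 (-x)) = g0 := by
      funext x; rw [hg0]; simp [neg_sq]
    rw [heq] at this
    simpa using this.symm
  have h4 : IntervalIntegrable g0 volume (-π) π := h3.trans h2
  have h5 : IntervalIntegrable (fun θ : ℝ => g0 (θ - π)) volume 0 (2*π) := by
    have := h4.comp_sub_right π
    simpa [two_mul] using this
  exact (h5.const_mul 200).add intervalIntegrable_const

private theorem f_integrable (r : ℝ) (hr0 : 0 < r) (hr1 : r < 1) :
    IntervalIntegrable (fun θ : ℝ => ‖Complex.log (1 + (r : ℂ) * Complex.exp (θ * Complex.I))‖ ^ 2)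
      volume 0 (2*π) := by
  apply Continuous.intervalIntegrable
  apply Continuous.pow
  apply Continuous.norm
  rw [continuous_iff_continuousAt]
  intro θ
  apply ContinuousAt.clog (by fun_prop)
  rw [Complex.mem_slitPlane_iff]
  left
  have : (1 + (r : ℂ) * Complex.exp (θ * Complex.I)).re = 1 + r * Real.cos θ := by
    simp [Complex.add_re, Complex.mul_re, Complex.exp_ofReal_mul_I_re]
  rw [this]
  nlinarith [abs_le.1 (Real.abs_cos_le_one θ)]

private theorem part2 :
    (∫⁻ z in Metric.ball (0 : ℂ) 1,
        ENNReal.ofReal (‖(z - 1) * (2 / (1 + z) ^ 3)‖ ^ 2 * (1 - ‖z‖ ^ 2) ^ 3) = ⊤) := by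
  set F : ℂ → ℝ≥0∞ := fun z =>
    ENNReal.ofReal (‖(z - 1) * (2 / (1 + z) ^ 3)‖ ^ 2 * (1 - ‖z‖ ^ 2) ^ 3) with hF
  have hmeas : Measurable F := by
    apply ENNReal.measurable_ofReal.comp
    fun_prop
  have key : ∀ x : ℝ, 0 < x → x ≤ 1/2 →
      ENNReal.ofReal (π/40 * x⁻¹) ≤ ∫⁻ z in Metric.ball (0:ℂ) 1, F z := by
    intro x hx hx2
    have hsub : Metric.ball (-1 + x : ℂ) (x/4) ⊆ Metric.ball (0:ℂ) 1 := by
      intro z hz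
      rw [Metric.mem_ball, dist_eq_norm] at hz ⊢
      have hc : ‖(-1 + x : ℂ)‖ = 1 - x := by
        rw [show (-1 + (x:ℂ)) = ((-1 + x : ℝ) : ℂ) by push_cast; ring, Complex.norm_real,
          Real.norm_eq_abs, abs_of_nonpos (by linarith)]
        ring
      calc ‖z - 0‖ = ‖(z - (-1+x)) + (-1+x)‖ := by ring_nf
      _ ≤ ‖z - (-1+x)‖ + ‖(-1+x:ℂ)‖ := norm_add_le _ _
      _ < x/4 + (1-x) := by rw [hc]; linarith
      _ < 1 := by linarith
    calc ENNReal.ofReal (π/40 * x⁻¹)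
        ≤ ENNReal.ofReal ((2/5)/x^3) * volume (Metric.ball (-1 + x : ℂ) (x/4)) := by
          rw [Complex.volume_ball, ← ENNReal.ofReal_pow (by positivity),
            show ((NNReal.pi : ℝ≥0∞)) = ENNReal.ofReal π by
              rw [← NNReal.coe_real_pi, ENNReal.ofReal_coe_nnreal],
            ← ENNReal.ofReal_mul (by positivity), ← ENNReal.ofReal_mul (by positivity)]
          apply ENNReal.ofReal_le_ofReal
          apply le_of_eq
          field_simp
          ring
      _ = ∫⁻ _ in Metric.ball (-1 + x : ℂ) (x/4), ENNReal.ofReal ((2/5)/x^3) :=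
          (setLIntegral_const _ _).symm
      _ ≤ ∫⁻ z in Metric.ball (-1 + x : ℂ) (x/4), F z := by
          apply setLIntegral_mono hmeas
          intro z hz
          exact ENNReal.ofReal_le_ofReal (ball_bound x hx hx2 z hz)
      _ ≤ ∫⁻ z in Metric.ball (0:ℂ) 1, F z := lintegral_mono_set hsub
  by_contra hne
  set I := ∫⁻ z in Metric.ball (0:ℂ) 1, F z with hI
  obtain ⟨n, hn⟩ := pow_unbounded_of_one_lt (I.toReal * 40/π) (show (1:ℝ) < 2 by norm_num)
  have h2n : (0:ℝ) < 2^(n+1) := by positivity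
  have hx2 : ((2:ℝ)^(n+1))⁻¹ ≤ 1/2 := by
    rw [inv_le_comm₀ h2n (by norm_num)]
    norm_num
    calc (2:ℝ) = 2^1 := (pow_one 2).symm
    _ ≤ 2^(n+1) := pow_le_pow_right₀ (by norm_num) (by omega)
  have hk := key ((2:ℝ)^(n+1))⁻¹ (by positivity) hx2
  rw [inv_inv] at hk
  have htr : π/40 * 2^(n+1) ≤ I.toReal := by
    rw [← ENNReal.ofReal_le_iff_le_toReal hne]
    exact hk
  have hpi := Real.pi_pos
  have h1 : (2:ℝ)^(n+1) ≤ I.toReal * 40/π := by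
    rw [le_div_iff₀ hpi]; nlinarith
  have h2 : (2:ℝ)^n < 2^(n+1) := by
    have := pow_pos (show (0:ℝ)<2 by norm_num) n
    calc (2:ℝ)^n < 2*2^n := by linarith
    _ = 2^(n+1) := by ring
  linarith

theorem stmt14 :
    -- `h(z) = log(1+z)` belongs to the Hardy space `H²` ...
    (∃ C : ℝ, ∀ r : ℝ, 0 < r → r < 1 →
      (∫ θ in (0 : ℝ)..(2 * π),
          ‖Complex.log (1 + (r : ℂ) * Complex.exp (θ * Complex.I))‖ ^ 2) / (2 * π) ≤ C) ∧
    -- ... but `∫_𝔻 |(z−1) h'''(z)|² (1−|z|²)³ dA(z) = +∞`, where `h'''(z) = 2/(1+z)³`.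
    (∫⁻ z in Metric.ball (0 : ℂ) 1,
        ENNReal.ofReal (‖(z - 1) * (2 / (1 + z) ^ 3)‖ ^ 2 * (1 - ‖z‖ ^ 2) ^ 3) = ⊤) := by
  constructor
  · refine ⟨(∫ θ in (0:ℝ)..(2*π), (200 * ((θ - π)^2) ^ (-(4:ℝ)⁻¹) + 50)) / (2*π), ?_⟩
    intro r hr0 hr1
    have hpi := Real.pi_pos
    gcongr
    apply intervalIntegral.integral_mono_ae_restrict (by positivity)
      (f_integrable r hr0 hr1) G_integrable
    refine (ae_restrict_iff' measurableSet_Icc).mpr ?_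
    have h0 : ∀ᵐ θ : ℝ ∂volume, θ ≠ π := by
      rw [ae_iff]
      have he : {θ : ℝ | ¬ θ ≠ π} = {π} := by ext; simp
      rw [he]
      exact measure_singleton π
    filter_upwards [h0] with θ hθ hmem
    exact pt_bound r θ hr0 hr1 hmem hθ
  · exact part2
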